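/- For every infinite group G, the ideal FT_G of finitely thin subsets is properly contained in the ideal Sp_G of sparse subsets: every subset of G that is n-thin for some positive natural number n is sparse, and G contains a sparse subset that is not n-thin for any n. -/

import Mathlib

open Pointwise

/-- A subset `A` of a group `G` is `n`-thin if for any pairwise distinct
`g 0, …, g n` the set `g 0 • A ∩ … ∩ g n • A` is finite. -/
def IsNThinSub {G : Type*} [Group G] (n : ℕ) (A : Set G) : Prop :=
  ∀ g : Fin (n + 1) → G, Function.Injective g → (⋂ i, g i • A).Finite

/-- A subset `A` of a group `G` is sparse if every infinite `X ⊆ G` has a finite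
subset `F` such that `⋂ g ∈ F, g • A` is finite. -/
def IsSparseSub {G : Type*} [Group G] (A : Set G) : Prop :=
  ∀ X : Set G, X.Infinite →
    ∃ F : Finset G, (F : Set G) ⊆ X ∧ (⋂ g ∈ F, (g : G) • A).Finite

namespace FTSp

section Arith

def e1 (n i : ℕ) : ℕ := n*n + n + i
def e2 (n k : ℕ) : ℕ := (n+k+1)*(n+k+1) + n

lemma e1_lt_e2 {n i : ℕ} (hi : i ≤ n) (k : ℕ) : e1 n i < e2 n k := by
  unfold e1 e2; nlinarith [Nat.mul_le_mul (Nat.le_add_right (n+1) k) (Nat.le_add_right (n+1) k)]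

lemma e1_inj {n i m j : ℕ} (hi : i ≤ n) (hj : j ≤ m) (h : e1 n i = e1 m j) : n = m ∧ i = j := by
  unfold e1 at h
  have hnm : n = m := by
    rcases lt_trichotomy n m with h' | h' | h'
    · nlinarith
    · exact h'
    · nlinarith
  subst hnm; omega

lemma e2_inj {n k m l : ℕ} (h : e2 n k = e2 m l) : n = m ∧ k = l := by
  unfold e2 at h
  have hs : n + k = m + l := by
    rcases lt_trichotomy (n+k) (m+l) with h' | h' | h'
    · nlinarith
    · exact h'
    · nlinarith
  have : n = m := by nlinarith
  omega

lemma e1_ne_e2 {n i m l : ℕ} (hi : i ≤ n) : e1 n i ≠ e2 m l := by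
  unfold e1 e2
  intro h
  rcases lt_trichotomy n (m+l+1) with h' | h' | h'
  · nlinarith [Nat.mul_le_mul h' h']
  · subst h'; omega
  · have h2 : m + l + 2 ≤ n := h'
    nlinarith [Nat.mul_le_mul h2 h2]

lemma le_e1_n {n i : ℕ} : n ≤ e1 n i := by unfold e1; nlinarith
lemma le_e1_i {n i : ℕ} : i ≤ e1 n i := by unfold e1; omega
lemma le_e2_n {n k : ℕ} : n ≤ e2 n k := by unfold e2; omega
lemma le_e2_k {n k : ℕ} : k ≤ e2 n k := by unfold e2; nlinarith

end Arith

variable {G : Type*} [Group G] [Infinite G]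

open Classical in
noncomputable def pickG (S : Set G) : G :=
  if h : S.Finite then h.infinite_compl.nonempty.choose else 1

lemma pickG_spec {S : Set G} (h : S.Finite) : pickG S ∉ S := by
  have : pickG S ∈ Sᶜ := by
    rw [pickG]
    rw [dif_pos h]
    exact h.infinite_compl.nonempty.choose_spec
  simpa using this

def ballOf (v : ℕ → G) (t : ℕ) : Set G := {1} ∪ ⋃ s ∈ Set.Iio t, {v s, (v s)⁻¹}

def badOf (v : ℕ → G) (t : ℕ) : Set G :=
  ballOf v t * ballOf v t * ballOf v t * ballOf v t * ballOf v t * ballOf v t * ballOf v t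

lemma ballOf_finite (v : ℕ → G) (t : ℕ) : (ballOf v t).Finite := by
  apply Set.Finite.union (Set.finite_singleton _)
  exact (Set.finite_Iio t).biUnion (fun s _ => (Set.finite_singleton ((v s)⁻¹)).insert (v s))

lemma badOf_finite (v : ℕ → G) (t : ℕ) : (badOf v t).Finite := by
  have h := ballOf_finite v t
  exact (((((h.mul h).mul h).mul h).mul h).mul h).mul h

noncomputable def useq : ℕ → G
  | t => pickG (badOf (fun s => if h : s < t then useq s else 1) t)
  termination_by t => t
  decreasing_by exact h

lemma ballOf_restrict (t : ℕ) :
    ballOf (fun s => if h : s < t then useq s else (1:G)) t = ballOf (useq : ℕ → G) t := by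
  unfold ballOf
  congr 1
  apply Set.iUnion_congr
  intro s
  by_cases hs : s < t
  · simp [hs]
  · simp [hs]

lemma useq_spec (t : ℕ) : (useq t : G) ∉ badOf useq t := by
  have h : (useq t : G) = pickG (badOf (fun s => if h : s < t then useq s else 1) t) := by
    rw [useq]
  rw [h]
  have : badOf (fun s => if h : s < t then useq s else (1:G)) t = badOf useq t := by
    unfold badOf; rw [ballOf_restrict]
  rw [this]
  exact pickG_spec (badOf_finite _ _)

lemma one_mem_ball (t : ℕ) : (1 : G) ∈ ballOf useq t := Or.inl rfl

lemma mem_ball {s t : ℕ} (h : s < t) : (useq s : G) ∈ ballOf useq t :=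
  Or.inr <| Set.mem_biUnion h (by simp)

lemma inv_mem_ball {s t : ℕ} (h : s < t) : (useq s : G)⁻¹ ∈ ballOf useq t :=
  Or.inr <| Set.mem_biUnion h (by simp)

lemma key7 {t : ℕ} {p q r s v w z : G} (hp : p ∈ ballOf useq t) (hq : q ∈ ballOf useq t)
    (hr : r ∈ ballOf useq t) (hs : s ∈ ballOf useq t) (hv : v ∈ ballOf useq t)
    (hw : w ∈ ballOf useq t) (hz : z ∈ ballOf useq t) :
    (useq t : G) ≠ p * q * r * s * v * w * z := by
  intro h
  apply useq_spec (G := G) t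
  rw [h]
  exact Set.mul_mem_mul (Set.mul_mem_mul (Set.mul_mem_mul (Set.mul_mem_mul
    (Set.mul_mem_mul (Set.mul_mem_mul hp hq) hr) hs) hv) hw) hz

lemma key3 {t : ℕ} {p q r : G} (hp : p ∈ ballOf useq t) (hq : q ∈ ballOf useq t)
    (hr : r ∈ ballOf useq t) : (useq t : G) ≠ p * q * r := by
  have := key7 (G := G) (t := t) hp hq hr (one_mem_ball t) (one_mem_ball t) (one_mem_ball t)
    (one_mem_ball t)
  simpa using this

lemma useq_injective : Function.Injective (useq : ℕ → G) := by
  intro a b hab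
  by_contra hne
  wlog h : a < b generalizing a b
  · exact this hab.symm (Ne.symm hne) (by omega)
  exact key3 (G := G) (t := b) (mem_ball h) (one_mem_ball b) (one_mem_ball b)
    (by rw [mul_one, mul_one]; exact hab.symm)

/-- The translating elements. -/
noncomputable def cc (G : Type*) [Group G] [Infinite G] (n i : ℕ) : G := useq (e1 n i)

/-- The points. -/
noncomputable def xx (G : Type*) [Group G] [Infinite G] (n k : ℕ) : G := useq (e2 n k)

/-- The sparse, non-finitely-thin set. -/
def bigA (G : Type*) [Group G] [Infinite G] : Set G :=
  {a | ∃ n i k, i ≤ n ∧ a = (cc G n i)⁻¹ * xx G n k}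

lemma cc_inj {n i m j : ℕ} (hi : i ≤ n) (hj : j ≤ m) (h : cc G n i = cc G m j) :
    n = m ∧ i = j :=
  e1_inj hi hj (useq_injective h)

lemma xx_inj {n k m l : ℕ} (h : xx G n k = xx G m l) : n = m ∧ k = l :=
  e2_inj (useq_injective h)

/-- The set of "mixed representations" giving value `d`. -/
def Sd (d : G) : Set ((ℕ×ℕ×ℕ)×(ℕ×ℕ×ℕ)) :=
  {T | T.1.2.1 ≤ T.1.1 ∧ T.2.2.1 ≤ T.2.1 ∧ (T.1.1, T.1.2.2) ≠ (T.2.1, T.2.2.2) ∧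
    (cc G T.1.1 T.1.2.1)⁻¹ * xx G T.1.1 T.1.2.2 * (xx G T.2.1 T.2.2.2)⁻¹ * cc G T.2.1 T.2.2.1 = d}

lemma sd_finite (d : G) : (Sd (G := G) d).Finite := by
  by_contra hfin
  have hinf : (Sd (G := G) d).Infinite := hfin
  obtain ⟨T0, hT0⟩ := hinf.nonempty
  obtain ⟨⟨n0, i0, k0⟩, m0, j0, l0⟩ := T0
  obtain ⟨hi0, hj0, hne0, heq0⟩ := hT0
  simp only at hi0 hj0 hne0 heq0
  set N := max (max (e1 n0 i0) (e2 n0 k0)) (max (e1 m0 j0) (e2 m0 l0)) with hN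
  -- the part of Sd with small indices is finite
  have hbox : {T ∈ Sd (G := G) d | max (e2 T.1.1 T.1.2.2) (e2 T.2.1 T.2.2.2) ≤ N}.Finite := by
    apply Set.Finite.subset
      (((Set.finite_Iic N).prod ((Set.finite_Iic N).prod (Set.finite_Iic N))).prod
       ((Set.finite_Iic N).prod ((Set.finite_Iic N).prod (Set.finite_Iic N))))
    rintro ⟨⟨n, i, k⟩, m, j, l⟩ ⟨⟨hi, hj, _, _⟩, hle⟩
    simp only [sup_le_iff] at hle
    obtain ⟨h1, h2⟩ := hle
    have b1 : n ≤ N := le_trans le_e2_n h1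
    have b2 : k ≤ N := le_trans le_e2_k h1
    have b3 : m ≤ N := le_trans le_e2_n h2
    have b4 : l ≤ N := le_trans le_e2_k h2
    exact ⟨⟨b1, le_trans hi b1, b2⟩, b3, le_trans hj b3, b4⟩
  have hex : ∃ T ∈ Sd (G := G) d, N < max (e2 T.1.1 T.1.2.2) (e2 T.2.1 T.2.2.2) := by
    by_contra hcon
    push_neg at hcon
    exact hfin (hbox.subset fun T hT => ⟨hT, hcon T hT⟩)
  obtain ⟨⟨⟨n, i, k⟩, m, j, l⟩, hT, hM⟩ := hex
  obtain ⟨hi, hj, hne, heq⟩ := hT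
  simp only at hi hj hne heq hM
  have hxne : e2 n k ≠ e2 m l := by
    intro hE
    obtain ⟨h1, h2⟩ := e2_inj hE
    exact hne (by rw [h1, h2])
  have hb0a : e1 n0 i0 ≤ N := le_trans (le_max_left _ _) (le_max_left _ _)
  have hb0b : e2 n0 k0 ≤ N := le_trans (le_max_right _ _) (le_max_left _ _)
  have hb0c : e1 m0 j0 ≤ N := le_trans (le_max_left _ _) (le_max_right _ _)
  have hb0d : e2 m0 l0 ≤ N := le_trans (le_max_right _ _) (le_max_right _ _)
  rcases lt_or_gt_of_ne hxne with hcase | hcase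
  · -- e2 n k < e2 m l : the maximum is e2 m l
    have hMl : N < e2 m l := by omega
    have hword : xx G m l = cc G m j * (cc G m0 j0)⁻¹ * xx G m0 l0 * (xx G n0 k0)⁻¹ *
        cc G n0 i0 * (cc G n i)⁻¹ * xx G n k := by
      have h1 : xx G m l =
          cc G m j * ((cc G n i)⁻¹ * xx G n k * (xx G m l)⁻¹ * cc G m j)⁻¹ *
            (cc G n i)⁻¹ * xx G n k := by group
      rw [heq, ← heq0] at h1
      rw [h1]; group
    have m1 : cc G m j ∈ ballOf useq (e2 m l) := mem_ball (e1_lt_e2 hj l)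
    have m2 : (cc G m0 j0)⁻¹ ∈ ballOf useq (e2 m l) := inv_mem_ball (by omega)
    have m3 : xx G m0 l0 ∈ ballOf useq (e2 m l) := mem_ball (by omega)
    have m4 : (xx G n0 k0)⁻¹ ∈ ballOf useq (e2 m l) := inv_mem_ball (by omega)
    have m5 : cc G n0 i0 ∈ ballOf useq (e2 m l) := mem_ball (by omega)
    have m6 : (cc G n i)⁻¹ ∈ ballOf useq (e2 m l) := inv_mem_ball (lt_trans (e1_lt_e2 hi k) hcase)
    have m7 : xx G n k ∈ ballOf useq (e2 m l) := mem_ball hcase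
    exact key7 m1 m2 m3 m4 m5 m6 m7 hword
  · -- e2 m l < e2 n k : the maximum is e2 n k
    have hMk : N < e2 n k := by omega
    have hword : xx G n k = cc G n i * (cc G n0 i0)⁻¹ * xx G n0 k0 * (xx G m0 l0)⁻¹ *
        cc G m0 j0 * (cc G m j)⁻¹ * xx G m l := by
      have h1 : xx G n k =
          cc G n i * ((cc G n i)⁻¹ * xx G n k * (xx G m l)⁻¹ * cc G m j) *
            (cc G m j)⁻¹ * xx G m l := by group
      rw [heq, ← heq0] at h1
      rw [h1]; group
    have m1 : cc G n i ∈ ballOf useq (e2 n k) := mem_ball (e1_lt_e2 hi k)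
    have m2 : (cc G n0 i0)⁻¹ ∈ ballOf useq (e2 n k) := inv_mem_ball (by omega)
    have m3 : xx G n0 k0 ∈ ballOf useq (e2 n k) := mem_ball (by omega)
    have m4 : (xx G m0 l0)⁻¹ ∈ ballOf useq (e2 n k) := inv_mem_ball (by omega)
    have m5 : cc G m0 j0 ∈ ballOf useq (e2 n k) := mem_ball (by omega)
    have m6 : (cc G m j)⁻¹ ∈ ballOf useq (e2 n k) := inv_mem_ball (lt_trans (e1_lt_e2 hj l) hcase)
    have m7 : xx G m l ∈ ballOf useq (e2 n k) := mem_ball hcase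
    exact key7 m1 m2 m3 m4 m5 m6 m7 hword

lemma block_unique {n i j m i' j' : ℕ} (hi : i ≤ n) (hj : j ≤ n) (hi' : i' ≤ m)
    (hj' : j' ≤ m) (hij : i ≠ j) (hij' : i' ≠ j')
    (h : (cc G n i)⁻¹ * cc G n j = (cc G m i')⁻¹ * cc G m j') : n = m := by
  by_contra hnm
  have d12 : e1 n i ≠ e1 n j := fun hE => hij (e1_inj hi hj hE).2
  have d13 : e1 n i ≠ e1 m i' := fun hE => hnm (e1_inj hi hi' hE).1
  have d14 : e1 n i ≠ e1 m j' := fun hE => hnm (e1_inj hi hj' hE).1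
  have d23 : e1 n j ≠ e1 m i' := fun hE => hnm (e1_inj hj hi' hE).1
  have d24 : e1 n j ≠ e1 m j' := fun hE => hnm (e1_inj hj hj' hE).1
  have d34 : e1 m i' ≠ e1 m j' := fun hE => hij' (e1_inj hi' hj' hE).2
  have hcases : (e1 n j < e1 n i ∧ e1 m i' < e1 n i ∧ e1 m j' < e1 n i) ∨
      (e1 n i < e1 n j ∧ e1 m i' < e1 n j ∧ e1 m j' < e1 n j) ∨
      (e1 n i < e1 m i' ∧ e1 n j < e1 m i' ∧ e1 m j' < e1 m i') ∨
      (e1 n i < e1 m j' ∧ e1 n j < e1 m j' ∧ e1 m i' < e1 m j') := by omega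
  rcases hcases with ⟨h1, h2, h3⟩ | ⟨h1, h2, h3⟩ | ⟨h1, h2, h3⟩ | ⟨h1, h2, h3⟩
  · have hword : cc G n i = cc G n j * (cc G m j')⁻¹ * cc G m i' := by
      have h2' : cc G n i * ((cc G n i)⁻¹ * cc G n j) = cc G n j := by group
      rw [h] at h2'
      rw [← h2']; group
    exact key3 (mem_ball h1) (inv_mem_ball h3) (mem_ball h2) hword
  · have hword : cc G n j = cc G n i * (cc G m i')⁻¹ * cc G m j' := by
      have h2' : cc G n j = cc G n i * ((cc G n i)⁻¹ * cc G n j) := by group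
      rw [h] at h2'
      rw [h2']; group
    exact key3 (mem_ball h1) (inv_mem_ball h2) (mem_ball h3) hword
  · have hword : cc G m i' = cc G m j' * (cc G n j)⁻¹ * cc G n i := by
      have h2' : cc G m i' * ((cc G m i')⁻¹ * cc G m j') = cc G m j' := by group
      rw [← h] at h2'
      rw [← h2']; group
    exact key3 (mem_ball h3) (inv_mem_ball h2) (mem_ball h1) hword
  · have hword : cc G m j' = cc G m i' * (cc G n i)⁻¹ * cc G n j := by
      have h2' : cc G m j' = cc G m i' * ((cc G m i')⁻¹ * cc G m j') := by group
      rw [← h] at h2'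
      rw [h2']; group
    exact key3 (mem_ball h3) (inv_mem_ball h1) (mem_ball h2) hword

def badY (g d : G) : Set G :=
  (fun T : (ℕ×ℕ×ℕ)×(ℕ×ℕ×ℕ) => g * ((cc G T.1.1 T.1.2.1)⁻¹ * xx G T.1.1 T.1.2.2)) '' Sd d

lemma badY_finite (g d : G) : (badY g d).Finite := (sd_finite d).image _

lemma mem_smul_bigA {g y : G} :
    y ∈ g • bigA G ↔ ∃ n i k, i ≤ n ∧ y = g * ((cc G n i)⁻¹ * xx G n k) := by
  rw [Set.mem_smul_set]
  constructor
  · rintro ⟨b, ⟨n, i, k, hi, rfl⟩, rfl⟩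
    exact ⟨n, i, k, hi, (smul_eq_mul ..).symm⟩
  · rintro ⟨n, i, k, hi, rfl⟩
    exact ⟨(cc G n i)⁻¹ * xx G n k, ⟨n, i, k, hi, rfl⟩, smul_eq_mul ..⟩

lemma same_point {g g' y : G} {n i k m j l : ℕ} (hi : i ≤ n) (hj : j ≤ m)
    (h1 : y = g * ((cc G n i)⁻¹ * xx G n k)) (h2 : y = g' * ((cc G m j)⁻¹ * xx G m l))
    (hyb : y ∉ badY g (g⁻¹ * g')) : n = m ∧ g⁻¹ * g' = (cc G n i)⁻¹ * cc G m j := by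
  have h12 : g * ((cc G n i)⁻¹ * xx G n k) = g' * ((cc G m j)⁻¹ * xx G m l) := by
    rw [← h1, ← h2]
  have hpt : (n, k) = (m, l) := by
    by_contra hne2
    apply hyb
    refine ⟨((n, i, k), (m, j, l)), ⟨hi, hj, hne2, ?_⟩, h1.symm⟩
    calc (cc G n i)⁻¹ * xx G n k * (xx G m l)⁻¹ * cc G m j
        = g⁻¹ * (g * ((cc G n i)⁻¹ * xx G n k)) * ((xx G m l)⁻¹ * cc G m j) := by group
      _ = g⁻¹ * (g' * ((cc G m j)⁻¹ * xx G m l)) * ((xx G m l)⁻¹ * cc G m j) := by rw [h12]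
      _ = g⁻¹ * g' := by group
  have hnm : n = m := congrArg Prod.fst hpt
  have hkl : k = l := congrArg Prod.snd hpt
  subst hnm; subst hkl
  refine ⟨rfl, ?_⟩
  calc g⁻¹ * g' = g⁻¹ * (g' * ((cc G n j)⁻¹ * xx G n k)) * (xx G n k)⁻¹ * cc G n j := by group
    _ = g⁻¹ * (g * ((cc G n i)⁻¹ * xx G n k)) * (xx G n k)⁻¹ * cc G n j := by rw [h12]
    _ = (cc G n i)⁻¹ * cc G n j := by group

lemma pair_lemma {g g' : G} (hne : g ≠ g')
    (h : (g • bigA G ∩ g' • bigA G).Infinite) :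
    ∃ n i j, i ≤ n ∧ j ≤ n ∧ i ≠ j ∧ g⁻¹ * g' = (cc G n i)⁻¹ * cc G n j := by
  obtain ⟨y, hy, hyb⟩ := (h.diff (badY_finite g (g⁻¹ * g'))).nonempty
  obtain ⟨n, i, k, hi, h1⟩ := mem_smul_bigA.1 hy.1
  obtain ⟨m, j, l, hj, h2⟩ := mem_smul_bigA.1 hy.2
  obtain ⟨hnm, hd⟩ := same_point hi hj h1 h2 hyb
  subst hnm
  refine ⟨n, i, j, hi, hj, ?_, hd⟩
  rintro rfl
  apply hne
  have : g⁻¹ * g' = 1 := by rw [hd]; group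
  calc g = g * (g⁻¹ * g') := by rw [this]; group
    _ = g' := by group

lemma triple_lemma {g g' g'' : G}
    (h : ((g • bigA G ∩ g' • bigA G) ∩ g'' • bigA G).Infinite) :
    ∃ n i j j'', i ≤ n ∧ j ≤ n ∧ j'' ≤ n ∧ g⁻¹ * g' = (cc G n i)⁻¹ * cc G n j ∧
      g⁻¹ * g'' = (cc G n i)⁻¹ * cc G n j'' := by
  obtain ⟨y, hy, hyb⟩ :=
    (h.diff ((badY_finite g (g⁻¹ * g')).union (badY_finite g (g⁻¹ * g'')))).nonempty
  rw [Set.mem_union] at hyb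
  push_neg at hyb
  obtain ⟨n, i, k, hi, h1⟩ := mem_smul_bigA.1 hy.1.1
  obtain ⟨m, j, l, hj, h2⟩ := mem_smul_bigA.1 hy.1.2
  obtain ⟨m2, j2, l2, hj2, h3⟩ := mem_smul_bigA.1 hy.2
  obtain ⟨hnm, hd⟩ := same_point hi hj h1 h2 hyb.1
  obtain ⟨hnm2, hd2⟩ := same_point hi hj2 h1 h3 hyb.2
  subst hnm; subst hnm2
  exact ⟨n, i, j, j2, hi, hj, hj2, hd, hd2⟩

lemma not_thin (n : ℕ) : ¬ IsNThinSub n (bigA G) := by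
  intro hthin
  have hinj : Function.Injective (fun i : Fin (n+1) => cc G n i) := by
    intro a b hab
    exact Fin.ext (cc_inj (Nat.lt_succ_iff.1 a.isLt) (Nat.lt_succ_iff.1 b.isLt) hab).2
  have hsub : Set.range (xx G n) ⊆ ⋂ i : Fin (n+1), (fun i : Fin (n+1) => cc G n i) i • bigA G := by
    rintro _ ⟨k, rfl⟩
    rw [Set.mem_iInter]
    intro i
    exact mem_smul_bigA.2 ⟨n, i, k, Nat.lt_succ_iff.1 i.isLt, by group⟩
  have hinf : (Set.range (xx G n)).Infinite :=
    Set.infinite_range_of_injective (fun k l hkl => (xx_inj hkl).2)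
  exact (hinf.mono hsub) (hthin _ hinj)

lemma sparse_bigA : IsSparseSub (bigA G) := by
  classical
  intro X hX
  obtain ⟨g, hgX, g', hg'X, hne⟩ := hX.nontrivial
  by_cases hfin : (g • bigA G ∩ g' • bigA G).Finite
  · refine ⟨{g, g'}, ?_, ?_⟩
    · intro z hz
      simp only [Finset.coe_insert, Finset.coe_singleton, Set.mem_insert_iff,
        Set.mem_singleton_iff] at hz
      rcases hz with rfl | rfl
      · exact hgX
      · exact hg'X
    · rw [show ({g, g'} : Finset G) = insert g {g'} from rfl, Finset.set_biInter_insert,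
        Finset.set_biInter_singleton]
      exact hfin
  · have hinf : (g • bigA G ∩ g' • bigA G).Infinite := hfin
    obtain ⟨n0, i0, j0, hi0, hj0, hij0, hd0⟩ := pair_lemma hne hinf
    set B : Set G := (fun p : ℕ × ℕ => g * ((cc G n0 p.1)⁻¹ * cc G n0 p.2)) ''
      (Set.Iic n0 ×ˢ Set.Iic n0) with hBdef
    have hB : B.Finite := ((Set.finite_Iic n0).prod (Set.finite_Iic n0)).image _
    obtain ⟨g'', hg''⟩ := (hX.diff ((hB.union (Set.finite_singleton g)).union
      (Set.finite_singleton g'))).nonempty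
    obtain ⟨hg''X, hg''n⟩ := hg''
    simp only [Set.mem_union, Set.mem_singleton_iff] at hg''n
    push_neg at hg''n
    obtain ⟨⟨hg''B, hgg''⟩, hg'g''⟩ := hg''n
    have htrip : ((g • bigA G ∩ g' • bigA G) ∩ g'' • bigA G).Finite := by
      by_contra htr
      have htr' : ((g • bigA G ∩ g' • bigA G) ∩ g'' • bigA G).Infinite := htr
      obtain ⟨n, i, j, j'', hi, hj, hj'', hd, hd2⟩ := triple_lemma htr'
      have hij : i ≠ j := by
        rintro rfl
        apply hne
        have h1 : g⁻¹ * g' = 1 := by rw [hd]; group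
        calc g = g * (g⁻¹ * g') := by rw [h1]; group
          _ = g' := by group
      have hn : n0 = n := block_unique hi0 hj0 hi hj hij0 hij (hd0.symm.trans hd)
      subst hn
      apply hg''B
      refine ⟨(i, j''), ?_, ?_⟩
      · exact ⟨Set.mem_Iic.2 hi, Set.mem_Iic.2 hj''⟩
      · show g * ((cc G n0 i)⁻¹ * cc G n0 j'') = g''
        calc g * ((cc G n0 i)⁻¹ * cc G n0 j'') = g * (g⁻¹ * g'') := by rw [← hd2]
          _ = g'' := by group
    refine ⟨{g, g', g''}, ?_, ?_⟩
    · intro z hz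
      simp only [Finset.coe_insert, Finset.coe_singleton, Set.mem_insert_iff,
        Set.mem_singleton_iff] at hz
      rcases hz with rfl | rfl | rfl
      · exact hgX
      · exact hg'X
      · exact hg''X
    · rw [show ({g, g', g''} : Finset G) = insert g (insert g' {g''}) from rfl,
        Finset.set_biInter_insert, Finset.set_biInter_insert, Finset.set_biInter_singleton,
        ← Set.inter_assoc]
      exact htrip

lemma thin_imp_sparse {A : Set G} (n : ℕ) (hA : IsNThinSub n A) : IsSparseSub A := by
  intro X hX
  obtain ⟨s, hsub, hcard⟩ := hX.exists_subset_card_eq (n+1)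
  refine ⟨s, hsub, ?_⟩
  have e := s.equivFin
  set g : Fin (n+1) → G := fun i => (e.symm (Fin.cast hcard.symm i) : G) with hg
  have hginj : Function.Injective g := by
    intro a b hab
    have h1 := e.symm.injective (Subtype.ext hab)
    have h2 := congrArg Fin.val h1
    simpa [Fin.ext_iff] using h2
  apply (hA g hginj).subset
  intro y hy
  rw [Set.mem_iInter]
  intro i
  have hmem : g i ∈ s := (e.symm (Fin.cast hcard.symm i)).2
  exact Set.mem_iInter₂.1 hy (g i) hmem

end FTSp

/-- For every infinite group `G`, the ideal `FT_G` of finitely thin subsets is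
properly contained in the ideal `Sp_G` of sparse subsets: every subset that is
`n`-thin for some `0 < n` is sparse, and there is a sparse subset that is not
`n`-thin for any `0 < n`. -/
theorem finitelyThin_ssubset_sparse {G : Type*} [Group G] [Infinite G] :
    (∀ A : Set G, (∃ n : ℕ, 0 < n ∧ IsNThinSub n A) → IsSparseSub A) ∧
    (∃ A : Set G, IsSparseSub A ∧ ∀ n : ℕ, 0 < n → ¬ IsNThinSub n A) := by
  constructor
  · rintro A ⟨n, -, hA⟩
    exact FTSp.thin_imp_sparse n hA
  · exact ⟨FTSp.bigA G, FTSp.sparse_bigA, fun n _ => FTSp.not_thin n⟩
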